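/- Let d ≥ 2 and n ≥ 0 be integers, and let T(n,k) = ∑_{i=0}^{k} (-1)^i C(k,i) (k-i)^n be the number of surjective functions from an n-element set onto a k-element set. Then ∑_{y=0}^{d} y(y-1) · C(d,y) · ( T(n,y) + T(n,y+1) ) = d(d-1) · ( (d+1)^n - 2d^n + (d-1)^n ). (Equivalently: if n individuals each independently choose one of d+1 vertices uniformly at random and Y is the number of distinct vertices chosen among a fixed subset of d of them, then E(Y(Y-1)) = d(d-1)[1 - 2(d/(d+1))^n + ((d-1)/(d+1))^n].) -/

import Mathlib

/-- `surjCount n k = T(n,k)`, the number of surjective functions from an `n`-element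
set onto a `k`-element set, by inclusion-exclusion. -/
def surjCount (n k : ℕ) : ℤ :=
  ∑ i ∈ Finset.range (k + 1), (-1) ^ i * (k.choose i : ℤ) * ((k - i : ℕ) : ℤ) ^ n

lemma surjCount_eq (n k : ℕ) :
    surjCount n k = ∑ j ∈ Finset.range (k + 1), (-1) ^ (k + j) * (k.choose j : ℤ) * (j : ℤ) ^ n := by
  rw [surjCount, ← Finset.sum_range_reflect]
  refine Finset.sum_congr rfl fun j hj => ?_
  simp only [Finset.mem_range, Nat.lt_succ_iff] at hj
  have h1 : k + 1 - 1 - j = k - j := by omega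
  have h2 : k - (k - j) = j := by omega
  rw [h1, Nat.choose_symm hj, h2]
  have h3 : k + j = (k - j) + 2 * j := by omega
  rw [h3, pow_add, pow_mul]
  norm_num

lemma surjCount_add_eq (n y : ℕ) :
    surjCount n y + surjCount n (y + 1)
      = ∑ j ∈ Finset.range (y + 1), (-1) ^ (y + j) * (y.choose j : ℤ) * ((j : ℤ) + 1) ^ n := by
  have h1 : surjCount n y
      = (∑ j ∈ Finset.range (y + 1),
          -((-1 : ℤ) ^ (y + j) * (y.choose (j + 1) : ℤ) * ((j : ℤ) + 1) ^ n))
        + (-1 : ℤ) ^ y * (0 : ℤ) ^ n := by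
    rw [surjCount_eq, Finset.sum_range_succ', Finset.sum_range_succ, Nat.choose_succ_self]
    push_cast
    rw [add_assoc]
    congr 1
    · refine Finset.sum_congr rfl fun j hj => ?_
      have h : y + (j + 1) = (y + j) + 1 := by ring
      rw [h, pow_succ]
      ring
    · simp [pow_succ]
  have h2 : surjCount n (y + 1)
      = (∑ j ∈ Finset.range (y + 1),
          (-1 : ℤ) ^ (y + j) * ((y + 1).choose (j + 1) : ℤ) * ((j : ℤ) + 1) ^ n)
        + (-1 : ℤ) ^ (y + 1) * (0 : ℤ) ^ n := by
    rw [surjCount_eq, Finset.sum_range_succ']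
    push_cast
    congr 1
    · refine Finset.sum_congr rfl fun j hj => ?_
      have h : (y + 1) + (j + 1) = (y + j) + 2 := by ring
      rw [h, pow_add]
      ring
    · simp [pow_succ]
  rw [h1, h2]
  have hc : (-1 : ℤ) ^ y * (0 : ℤ) ^ n + (-1 : ℤ) ^ (y + 1) * (0 : ℤ) ^ n = 0 := by
    rw [pow_succ]; ring
  rw [add_add_add_comm, hc, add_zero, ← Finset.sum_add_distrib]
  refine Finset.sum_congr rfl fun j hj => ?_
  have hcc : ((y + 1).choose (j + 1) : ℤ) = (y.choose j : ℤ) + (y.choose (j + 1) : ℤ) := by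
    exact_mod_cast congrArg Nat.cast (Nat.choose_succ_succ y j)
  rw [hcc]
  ring

lemma alt_sum_choose (r : ℕ) :
    ∑ t ∈ Finset.range (r + 1), (-1 : ℤ) ^ t * (r.choose t : ℤ)
      = if r = 0 then 1 else 0 :=
  Int.alternating_sum_range_choose

lemma alt_sum_mul_choose (r : ℕ) :
    ∑ t ∈ Finset.range (r + 1), (-1 : ℤ) ^ t * (t : ℤ) * (r.choose t : ℤ)
      = if r = 1 then -1 else 0 := by
  cases r with
  | zero => simp
  | succ r' =>
    rw [Finset.sum_range_succ']
    simp only [Nat.cast_zero, mul_zero, zero_mul, add_zero]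
    have hterm : ∀ t : ℕ, (-1 : ℤ) ^ (t + 1) * ((t : ℤ) + 1) * ((r' + 1).choose (t + 1) : ℤ)
        = -(((r' : ℤ) + 1) * ((-1) ^ t * (r'.choose t : ℤ))) := by
      intro t
      have h := Nat.add_one_mul_choose_eq r' t
      have h' : ((r' + 1).choose (t + 1) : ℤ) * ((t : ℤ) + 1) = ((r' : ℤ) + 1) * (r'.choose t : ℤ) := by
        exact_mod_cast congrArg Nat.cast h.symm
      rw [pow_succ]
      linear_combination (-(-1 : ℤ) ^ t) * h'
    calc ∑ t ∈ Finset.range (r' + 1), (-1 : ℤ) ^ (t + 1) * ((t : ℤ) + 1) * ((r' + 1).choose (t + 1) : ℤ)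
        = ∑ t ∈ Finset.range (r' + 1), -(((r' : ℤ) + 1) * ((-1) ^ t * (r'.choose t : ℤ))) := by
          refine Finset.sum_congr rfl fun t _ => hterm t
      _ = -(((r' : ℤ) + 1) * ∑ t ∈ Finset.range (r' + 1), (-1 : ℤ) ^ t * (r'.choose t : ℤ)) := by
          rw [Finset.sum_neg_distrib, ← Finset.mul_sum]
      _ = if r' + 1 = 1 then -1 else 0 := by
          rw [alt_sum_choose]
          by_cases h : r' = 0 <;> simp [h]

lemma alt_sum_mul_mul_choose (r : ℕ) :
    ∑ t ∈ Finset.range (r + 1), (-1 : ℤ) ^ t * ((t : ℤ) * ((t : ℤ) - 1)) * (r.choose t : ℤ)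
      = if r = 2 then 2 else 0 := by
  cases r with
  | zero => simp
  | succ r' =>
    rw [Finset.sum_range_succ']
    simp only [Nat.cast_zero, mul_zero, zero_mul, add_zero]
    have hterm : ∀ t : ℕ,
        (-1 : ℤ) ^ (t + 1) * (((t : ℤ) + 1) * (((t : ℤ) + 1) - 1)) * ((r' + 1).choose (t + 1) : ℤ)
        = -(((r' : ℤ) + 1) * ((-1) ^ t * (t : ℤ) * (r'.choose t : ℤ))) := by
      intro t
      have h' : ((r' + 1).choose (t + 1) : ℤ) * ((t : ℤ) + 1)
          = ((r' : ℤ) + 1) * (r'.choose t : ℤ) := by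
        exact_mod_cast congrArg Nat.cast (Nat.add_one_mul_choose_eq r' t).symm
      rw [pow_succ]
      linear_combination (-(-1 : ℤ) ^ t * (t : ℤ)) * h'
    calc ∑ t ∈ Finset.range (r' + 1),
          (-1 : ℤ) ^ (t + 1) * (((t : ℤ) + 1) * (((t : ℤ) + 1) - 1)) * ((r' + 1).choose (t + 1) : ℤ)
        = ∑ t ∈ Finset.range (r' + 1), -(((r' : ℤ) + 1) * ((-1) ^ t * (t : ℤ) * (r'.choose t : ℤ))) := by
          refine Finset.sum_congr rfl fun t _ => hterm t
      _ = -(((r' : ℤ) + 1) * ∑ t ∈ Finset.range (r' + 1), (-1 : ℤ) ^ t * (t : ℤ) * (r'.choose t : ℤ)) := by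
          rw [Finset.sum_neg_distrib, ← Finset.mul_sum]
      _ = if r' + 1 = 2 then 2 else 0 := by
          rw [alt_sum_mul_choose]
          by_cases h : r' = 1 <;> simp [h]

lemma inner_alt_sum (r j : ℕ) :
    ∑ t ∈ Finset.range (r + 1),
        (-1 : ℤ) ^ t * (r.choose t : ℤ) * (((j : ℤ) + t) * ((j : ℤ) + t - 1))
      = (j : ℤ) * ((j : ℤ) - 1) * (if r = 0 then 1 else 0)
        + 2 * (j : ℤ) * (if r = 1 then -1 else 0) + (if r = 2 then 2 else 0) := by
  have expand : ∀ t : ℕ, (-1 : ℤ) ^ t * (r.choose t : ℤ) * (((j : ℤ) + t) * ((j : ℤ) + t - 1))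
      = (j : ℤ) * ((j : ℤ) - 1) * ((-1) ^ t * (r.choose t : ℤ))
        + 2 * (j : ℤ) * ((-1) ^ t * (t : ℤ) * (r.choose t : ℤ))
        + (-1) ^ t * ((t : ℤ) * ((t : ℤ) - 1)) * (r.choose t : ℤ) := by
    intro t; ring
  simp_rw [expand]
  rw [Finset.sum_add_distrib, Finset.sum_add_distrib, ← Finset.mul_sum, ← Finset.mul_sum,
    alt_sum_choose, alt_sum_mul_choose, alt_sum_mul_mul_choose]

lemma c_sum (d j : ℕ) (hj : j ≤ d) :
    ∑ y ∈ Finset.range (d + 1),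
        (-1 : ℤ) ^ (y + j) * ((y : ℤ) * ((y : ℤ) - 1)) * (d.choose y : ℤ) * (y.choose j : ℤ)
      = (d.choose j : ℤ) *
        ((j : ℤ) * ((j : ℤ) - 1) * (if d - j = 0 then 1 else 0)
          + 2 * (j : ℤ) * (if d - j = 1 then -1 else 0) + (if d - j = 2 then 2 else 0)) := by
  rw [Finset.range_eq_Ico, ← Finset.sum_Ico_consecutive _ (Nat.zero_le j) (show j ≤ d + 1 by omega)]
  have hfirst : ∑ y ∈ Finset.Ico 0 j,
      (-1 : ℤ) ^ (y + j) * ((y : ℤ) * ((y : ℤ) - 1)) * (d.choose y : ℤ) * (y.choose j : ℤ) = 0 := by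
    refine Finset.sum_eq_zero fun y hy => ?_
    simp only [Finset.mem_Ico] at hy
    rw [Nat.choose_eq_zero_of_lt hy.2]
    simp
  rw [hfirst, zero_add, Finset.sum_Ico_eq_sum_range]
  have hlen : d + 1 - j = (d - j) + 1 := by omega
  rw [hlen]
  have hterm : ∀ t ∈ Finset.range ((d - j) + 1),
      (-1 : ℤ) ^ (j + t + j) * (((j + t : ℕ) : ℤ) * (((j + t : ℕ) : ℤ) - 1)) *
          (d.choose (j + t) : ℤ) * ((j + t).choose j : ℤ)
      = (d.choose j : ℤ) *
          ((-1 : ℤ) ^ t * ((d - j).choose t : ℤ) * (((j : ℤ) + t) * ((j : ℤ) + t - 1))) := by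
    intro t ht
    simp only [Finset.mem_range, Nat.lt_succ_iff] at ht
    have hjt : j + t ≤ d := by omega
    have hcc : (d.choose (j + t) : ℤ) * ((j + t).choose j : ℤ)
        = (d.choose j : ℤ) * ((d - j).choose t : ℤ) := by
      have := Nat.choose_mul (n := d) (Nat.le_add_right j t)
      rw [Nat.add_sub_cancel_left] at this
      exact_mod_cast congrArg Nat.cast this
    have hsign : (-1 : ℤ) ^ (j + t + j) = (-1) ^ t := by
      have h : j + t + j = t + 2 * j := by ring
      rw [h, pow_add, pow_mul, neg_one_sq, one_pow, mul_one]
    rw [hsign]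
    push_cast
    linear_combination ((-1 : ℤ) ^ t * (((j : ℤ) + t) * ((j : ℤ) + t - 1))) * hcc
  rw [Finset.sum_congr rfl hterm, ← Finset.mul_sum, inner_alt_sum]

/-- Second factorial moment identity in the move-forward-or-die model:
`∑_{y=0}^{d} y(y-1)·C(d,y)·(T(n,y)+T(n,y+1)) = d(d-1)((d+1)ⁿ - 2dⁿ + (d-1)ⁿ)`. -/
theorem sum_mul_sub_one_choose_surjCount_add (d n : ℕ) (hd : 2 ≤ d) :
    ∑ y ∈ Finset.range (d + 1),
        (y : ℤ) * ((y : ℤ) - 1) * (d.choose y : ℤ) * (surjCount n y + surjCount n (y + 1))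
      = (d : ℤ) * ((d : ℤ) - 1) *
        (((d : ℤ) + 1) ^ n - 2 * (d : ℤ) ^ n + ((d : ℤ) - 1) ^ n) := by
  have step1 : ∀ y ∈ Finset.range (d + 1),
      (y : ℤ) * ((y : ℤ) - 1) * (d.choose y : ℤ) * (surjCount n y + surjCount n (y + 1))
      = ∑ j ∈ Finset.range (d + 1),
          (-1 : ℤ) ^ (y + j) * ((y : ℤ) * ((y : ℤ) - 1)) * (d.choose y : ℤ) * (y.choose j : ℤ)
            * ((j : ℤ) + 1) ^ n := by
    intro y hy
    simp only [Finset.mem_range, Nat.lt_succ_iff] at hy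
    rw [surjCount_add_eq, Finset.mul_sum]
    rw [Finset.sum_subset (Finset.range_subset_range.mpr (by omega : y + 1 ≤ d + 1))]
    · exact Finset.sum_congr rfl fun j _ => by ring
    · intro j hj hnj
      simp only [Finset.mem_range, Nat.lt_succ_iff, not_le] at hj hnj
      rw [Nat.choose_eq_zero_of_lt hnj]
      simp
  rw [Finset.sum_congr rfl step1, Finset.sum_comm]
  have step2 : ∀ j ∈ Finset.range (d + 1),
      ∑ y ∈ Finset.range (d + 1),
          (-1 : ℤ) ^ (y + j) * ((y : ℤ) * ((y : ℤ) - 1)) * (d.choose y : ℤ) * (y.choose j : ℤ)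
            * ((j : ℤ) + 1) ^ n
      = ((d.choose j : ℤ) *
          ((j : ℤ) * ((j : ℤ) - 1) * (if d - j = 0 then 1 else 0)
            + 2 * (j : ℤ) * (if d - j = 1 then -1 else 0) + (if d - j = 2 then 2 else 0)))
          * ((j : ℤ) + 1) ^ n := by
    intro j hj
    simp only [Finset.mem_range, Nat.lt_succ_iff] at hj
    rw [← Finset.sum_mul, c_sum d j hj]
  rw [Finset.sum_congr rfl step2]
  have hsub : ({d - 2, d - 1, d} : Finset ℕ) ⊆ Finset.range (d + 1) := by
    intro x hx
    simp only [Finset.mem_insert, Finset.mem_singleton] at hx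
    simp only [Finset.mem_range]
    omega
  rw [← Finset.sum_subset hsub]
  · have hne1 : (d - 2) ∉ ({d - 1, d} : Finset ℕ) := by
      simp only [Finset.mem_insert, Finset.mem_singleton]
      omega
    have hne2 : (d - 1) ∉ ({d} : Finset ℕ) := by
      simp only [Finset.mem_singleton]
      omega
    rw [Finset.sum_insert hne1, Finset.sum_insert hne2, Finset.sum_singleton]
    have e2 : d - (d - 2) = 2 := by omega
    have e1 : d - (d - 1) = 1 := by omega
    have e0 : d - d = 0 := by omega
    rw [e2, e1, e0]
    norm_num
    have hc2 : (d.choose (d - 2) : ℤ) * 2 = (d : ℤ) * ((d : ℤ) - 1) := by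
      have hs : d.choose (d - 2) = d.choose 2 := Nat.choose_symm hd
      have hdvd : 2 ∣ d * (d - 1) := by
        have h := Nat.even_mul_succ_self (d - 1)
        rw [Nat.sub_add_cancel (by omega : 1 ≤ d)] at h
        rw [Nat.mul_comm]
        exact h.two_dvd
      have hn : d.choose 2 * 2 = d * (d - 1) := by
        rw [Nat.choose_two_right, Nat.div_mul_cancel hdvd]
      have := congrArg (Nat.cast (R := ℤ)) hn
      push_cast [Nat.cast_sub (by omega : 1 ≤ d), hs] at this ⊢
      linarith [this]
    have hc1 : (d.choose (d - 1) : ℤ) = (d : ℤ) := by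
      have hs : d.choose (d - 1) = d.choose 1 := Nat.choose_symm (by omega)
      rw [hs, Nat.choose_one_right]
    have hcast2 : ((d - 2 : ℕ) : ℤ) = (d : ℤ) - 2 := by
      push_cast [Nat.cast_sub hd]; ring
    have hcast1 : ((d - 1 : ℕ) : ℤ) = (d : ℤ) - 1 := by
      push_cast [Nat.cast_sub (by omega : 1 ≤ d)]; ring
    rw [hc1, hcast2, hcast1]
    linear_combination ((d : ℤ) - 1) ^ n * hc2
  · intro x hx hnx
    simp only [Finset.mem_range, Nat.lt_succ_iff] at hx
    simp only [Finset.mem_insert, Finset.mem_singleton] at hnx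
    push_neg at hnx
    have h0 : d - x ≠ 0 := by omega
    have h1 : d - x ≠ 1 := by omega
    have h2 : d - x ≠ 2 := by omega
    simp [h0, h1, h2]
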